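/- Let X be a Polish metric space and f : X → X a uniform homeomorphism. Then the set M_exp of expansive measures of f (Borel probability measures μ for which there exists δ > 0 with μ(Γ_δ(x)) = 0 for every x ∈ X, where Γ_δ(x) = {y : d(f^i x, f^i y) ≤ δ for all i ∈ ℤ}) is a G_{δσ} subset of P(X) with the weak topology, i.e. a countable union of G_δ sets. -/

import Mathlib

open MeasureTheory
open scoped ENNReal
open Filter Topology Set
open scoped NNReal

/-- `Γ_δ(x) = {y : d(f^i x, f^i y) ≤ δ for all i ∈ ℤ}`. -/
def expansiveGamma {X : Type*} [MetricSpace X] (f : Equiv.Perm X) (δ : ℝ) (x : X) : Set X :=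
  {y | ∀ i : ℤ, dist ((f ^ i) x) ((f ^ i) y) ≤ δ}

namespace Stmt19Aux

variable {X : Type*} [MetricSpace X]

def V (f : Equiv.Perm X) (a : ℝ) (x : X) (n : ℕ) : Set X :=
  {y | ∀ i : ℤ, |i| ≤ (n : ℤ) → dist ((f ^ i) x) ((f ^ i) y) ≤ a}

lemma continuous_zpow (f : Equiv.Perm X) (hf : UniformContinuous f)
    (hf' : UniformContinuous f.symm) (i : ℤ) : Continuous fun x : X => (f ^ i) x := by
  obtain ⟨n, rfl | rfl⟩ := i.eq_nat_or_neg
  · rw [zpow_natCast]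
    have : ⇑(f ^ n) = (⇑f)^[n] := Equiv.Perm.coe_pow f n
    rw [this]
    exact hf.continuous.iterate n
  · rw [zpow_neg, zpow_natCast, ← inv_pow]
    have : ⇑(f⁻¹ ^ n) = (⇑f⁻¹)^[n] := Equiv.Perm.coe_pow _ n
    rw [this, Equiv.Perm.inv_def]
    exact hf'.continuous.iterate n

variable (f : Equiv.Perm X)

lemma isClosed_V (hf : UniformContinuous f) (hf' : UniformContinuous f.symm) (a : ℝ) (x : X)
    (n : ℕ) : IsClosed (V f a x n) := by
  have : V f a x n = ⋂ (i : ℤ) (_ : |i| ≤ (n : ℤ)), {y | dist ((f ^ i) x) ((f ^ i) y) ≤ a} := by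
    ext y; simp [V]
  rw [this]
  refine isClosed_iInter fun i => isClosed_iInter fun _ => ?_
  exact isClosed_le (Continuous.dist continuous_const (continuous_zpow f hf hf' i))
    continuous_const

lemma isClosed_Gamma (hf : UniformContinuous f) (hf' : UniformContinuous f.symm) (a : ℝ)
    (x : X) : IsClosed (expansiveGamma f a x) := by
  have : expansiveGamma f a x = ⋂ (i : ℤ), {y | dist ((f ^ i) x) ((f ^ i) y) ≤ a} := by
    ext y; simp [expansiveGamma]
  rw [this]
  exact isClosed_iInter fun i => isClosed_le
    (Continuous.dist continuous_const (continuous_zpow f hf hf' i)) continuous_const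

lemma iInter_V (a : ℝ) (x : X) : ⋂ n, V f a x n = expansiveGamma f a x := by
  ext y
  simp only [mem_iInter, V, mem_setOf_eq, expansiveGamma]
  constructor
  · intro h i
    exact h i.natAbs i (Int.abs_eq_natAbs i).le
  · intro h n i _
    exact h i

lemma antitone_V (a : ℝ) (x : X) : Antitone (V f a x) := by
  intro m n hmn y hy i hi
  exact hy i (hi.trans (by exact_mod_cast hmn))

lemma gamma_mono {a b : ℝ} (hab : a ≤ b) (x : X) :
    expansiveGamma f a x ⊆ expansiveGamma f b x :=
  fun y hy i => (hy i).trans hab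

lemma tight {Y : Type*} [TopologicalSpace Y] [PolishSpace Y] [MeasurableSpace Y]
    [OpensMeasurableSpace Y] (μs : ℕ → ProbabilityMeasure Y) (ν : ProbabilityMeasure Y)
    (h : Tendsto μs atTop (𝓝 ν)) {ε : ℝ≥0∞} (hε : ε ≠ 0) :
    ∃ K : Set Y, IsCompact K ∧ ∀ j, (μs j : Measure Y) Kᶜ ≤ ε := by
  letI := TopologicalSpace.upgradeIsCompletelyMetrizable Y
  rcases isEmpty_or_nonempty Y with hY | hY
  · have h1 : (μs 0 : Measure Y) univ = 1 := measure_univ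
    rw [Set.eq_empty_of_isEmpty (univ : Set Y)] at h1
    simp at h1
  obtain ⟨u, hu⟩ := TopologicalSpace.exists_dense_seq Y
  set O : ℕ → ℕ → Set Y := fun p N => ⋃ i ∈ Finset.range N, Metric.ball (u i) (1 / (p + 1)) with hO
  have O_open : ∀ p N, IsOpen (O p N) := fun p N => isOpen_biUnion fun i _ => Metric.isOpen_ball
  have F_anti : ∀ p, Antitone fun N => (O p N)ᶜ := by
    intro p M N hMN
    apply compl_subset_compl.2
    apply biUnion_subset_biUnion_left
    exact fun i hi => Finset.mem_range.2 ((Finset.mem_range.1 hi).trans_le hMN)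
  have F_empty : ∀ p, ⋂ N, (O p N)ᶜ = ∅ := by
    intro p
    rw [eq_empty_iff_forall_notMem]
    intro x hx
    have hp : (0:ℝ) < 1 / (p + 1) := by positivity
    obtain ⟨i, hi⟩ := hu.exists_dist_lt x hp
    exact (mem_iInter.1 hx (i + 1)) (mem_biUnion (Finset.self_mem_range_succ i) hi)
  have htend : ∀ p (κ : ProbabilityMeasure Y),
      Tendsto (fun N => (κ : Measure Y) (O p N)ᶜ) atTop (𝓝 0) := by
    intro p κ
    have := tendsto_measure_iInter_atTop (μ := (κ : Measure Y))
      (s := fun N => (O p N)ᶜ)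
      (fun N => ((O_open p N).isClosed_compl.measurableSet).nullMeasurableSet)
      (F_anti p) ⟨0, measure_ne_top _ _⟩
    rw [F_empty p] at this
    simpa [Function.comp_def] using this
  have key : ∀ p (δ : ℝ≥0∞), δ ≠ 0 → ∃ N, ∀ j, (μs j : Measure Y) (O p N)ᶜ ≤ δ := by
    intro p δ hδ
    rcases eq_or_ne δ ⊤ with rfl | hδtop
    · exact ⟨0, fun j => le_top⟩
    have hδ2 : (0:ℝ≥0∞) < δ / 2 := ENNReal.div_pos hδ ENNReal.ofNat_ne_top
    -- choose N₀ with ν ((O p N₀)ᶜ) < δ/2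
    obtain ⟨N₀, hN₀⟩ := ((htend p ν).eventually_lt_const hδ2).exists
    have hls := ProbabilityMeasure.limsup_measure_closed_le_of_tendsto h
      (O_open p N₀).isClosed_compl
    have hev : ∀ᶠ j in atTop, (μs j : Measure Y) (O p N₀)ᶜ < δ / 2 :=
      eventually_lt_of_limsup_lt (lt_of_le_of_lt hls hN₀)
    obtain ⟨J, hJ⟩ := eventually_atTop.1 hev
    have hsingle : ∀ j, ∃ Nj, ∀ N ≥ Nj, (μs j : Measure Y) (O p N)ᶜ < δ :=
      fun j => eventually_atTop.1 (((htend p (μs j)).eventually_lt_const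
        (lt_of_le_of_ne (by simp) (Ne.symm hδ))).mono fun N hN => hN) |>.imp fun Nj hNj => hNj
    choose Nj hNj using hsingle
    refine ⟨max N₀ ((Finset.range J).sup Nj), fun j => ?_⟩
    rcases lt_or_ge j J with hj | hj
    · exact (hNj j _ (le_max_of_le_right (Finset.le_sup (Finset.mem_range.2 hj)))).le
    · calc (μs j : Measure Y) (O (p) (max N₀ ((Finset.range J).sup Nj)))ᶜ
          ≤ (μs j : Measure Y) (O p N₀)ᶜ := measure_mono (F_anti p (le_max_left _ _))
        _ ≤ δ / 2 := (hJ j hj).le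
        _ ≤ δ := ENNReal.half_le_self
  have hδp : ∀ p : ℕ, (ε * 2⁻¹ ^ (p + 1) : ℝ≥0∞) ≠ 0 :=
    fun p => mul_ne_zero hε (pow_ne_zero _ (ENNReal.inv_ne_zero.2 ENNReal.ofNat_ne_top))
  choose Np hNp using fun p => key p (ε * 2⁻¹ ^ (p + 1)) (hδp p)
  refine ⟨⋂ p, closure (O p (Np p)), ?_, ?_⟩
  · refine TotallyBounded.isCompact_of_isClosed ?_ (isClosed_iInter fun p => isClosed_closure)
    rw [Metric.totallyBounded_iff]
    intro r hr
    obtain ⟨p, hp⟩ := exists_nat_one_div_lt (half_pos hr)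
    refine ⟨u '' (Finset.range (Np p) : Finset ℕ), (Set.toFinite _).image u, ?_⟩
    intro x hx
    have hx' : x ∈ closure (O p (Np p)) := mem_iInter.1 hx p
    have hcl : closure (O p (Np p)) ⊆
        ⋃ i ∈ Finset.range (Np p), Metric.closedBall (u i) (1 / (p + 1)) := by
      apply closure_minimal
      · exact iUnion₂_mono fun i _ => Metric.ball_subset_closedBall
      · exact Set.Finite.isClosed_biUnion (Finset.range (Np p)).finite_toSet
          fun i _ => Metric.isClosed_closedBall
    have := hcl hx'
    simp only [mem_iUnion, exists_prop] at this
    obtain ⟨i, hi, hxi'⟩ := this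
    refine mem_biUnion ⟨i, by simpa using hi, rfl⟩ ?_
    have : dist x (u i) ≤ 1 / (p + 1) := Metric.mem_closedBall.1 hxi'
    exact Metric.mem_ball.2 (this.trans_lt (hp.trans (half_lt_self hr)))
  · intro j
    have hsub : (⋂ p, closure (O p (Np p)))ᶜ ⊆ ⋃ p, (O p (Np p))ᶜ := by
      rw [compl_iInter]
      exact iUnion_mono fun p => compl_subset_compl.2 subset_closure
    calc (μs j : Measure Y) (⋂ p, closure (O p (Np p)))ᶜ
        ≤ ∑' p, (μs j : Measure Y) (O p (Np p))ᶜ :=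
          (measure_mono hsub).trans (measure_iUnion_le _)
      _ ≤ ∑' p, (ε * 2⁻¹ ^ (p + 1)) := ENNReal.tsum_le_tsum fun p => hNp p j
      _ = ε := by
          rw [ENNReal.tsum_mul_left]
          have : ∑' p : ℕ, (2⁻¹ : ℝ≥0∞) ^ (p + 1) = 1 := by
            simp_rw [pow_succ]
            rw [ENNReal.tsum_mul_right, ENNReal.tsum_geometric, ENNReal.one_sub_inv_two,
              inv_inv]
            exact ENNReal.mul_inv_cancel two_ne_zero ENNReal.ofNat_ne_top |>.symm ▸ rfl
          rw [this, mul_one]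

variable [PolishSpace X] [MeasurableSpace X] [BorelSpace X]

lemma closure_W_subset (hf : UniformContinuous f) (hf' : UniformContinuous f.symm)
    {a : ℝ} (ha : 0 < a) {ε : ℝ≥0∞} (hε0 : ε ≠ 0) (hεtop : ε ≠ ∞) :
    closure {μ : ProbabilityMeasure X | ∃ x, ε ≤ (μ : Measure X) (expansiveGamma f a x)} ⊆
      {μ : ProbabilityMeasure X | ∃ x, ε ≤ (μ : Measure X) (expansiveGamma f (3 * a) x)} := by
  intro ν hν
  obtain ⟨μs, hmem, hlim⟩ := mem_closure_iff_seq_limit.1 hν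
  choose xs hxs using hmem
  obtain ⟨K, hK, hKb⟩ := tight μs ν hlim (ε := ε / 2)
    (ENNReal.div_pos hε0 ENNReal.ofNat_ne_top).ne'
  have hys : ∀ j, ∃ y, y ∈ expansiveGamma f a (xs j) ∩ K := by
    intro j
    by_contra hcon
    push_neg at hcon
    have hsub : expansiveGamma f a (xs j) ⊆ Kᶜ := by
      intro z hz
      by_contra hzK
      exact hcon z ⟨hz, not_not.1 hzK⟩
    have : ε ≤ ε / 2 := (hxs j).trans ((measure_mono hsub).trans (hKb j))
    exact absurd this (not_le.2 (ENNReal.half_lt_self hε0 hεtop))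
  choose ys hys using hys
  obtain ⟨y, hyK, φ, hφ, hyt⟩ := hK.tendsto_subseq fun j => (hys j).2
  have h2a : ∀ j, ε ≤ (μs j : Measure X) (expansiveGamma f (2 * a) (ys j)) := by
    intro j
    refine (hxs j).trans (measure_mono fun z hz i => ?_)
    calc dist ((f ^ i) (ys j)) ((f ^ i) z)
        ≤ dist ((f ^ i) (ys j)) ((f ^ i) (xs j)) + dist ((f ^ i) (xs j)) ((f ^ i) z) :=
          dist_triangle _ _ _
      _ ≤ a + a := add_le_add (dist_comm ((f ^ i) (xs j)) ((f ^ i) (ys j)) ▸ (hys j).1 i) (hz i)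
      _ = 2 * a := by ring
  have hVn : ∀ n : ℕ, ε ≤ (ν : Measure X) (V f (3 * a) y n) := by
    intro n
    have hev : ∀ᶠ j in atTop,
        ∀ i : ℤ, |i| ≤ (n : ℤ) → dist ((f ^ i) y) ((f ^ i) (ys (φ j))) ≤ a := by
      have : ∀ᶠ j in atTop, ∀ i ∈ Finset.Icc (-(n : ℤ)) n,
          dist ((f ^ i) y) ((f ^ i) (ys (φ j))) ≤ a := by
        rw [Finset.eventually_all]
        intro i _
        have hc : Tendsto (fun j => (f ^ i) (ys (φ j))) atTop (𝓝 ((f ^ i) y)) :=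
          ((continuous_zpow f hf hf' i).continuousAt.tendsto).comp hyt
        have hd : Tendsto (fun j => dist ((f ^ i) y) ((f ^ i) (ys (φ j)))) atTop (𝓝 0) := by
          have := Filter.Tendsto.dist
            (tendsto_const_nhds : Tendsto (fun _ : ℕ => (f ^ i) y) atTop (𝓝 ((f ^ i) y))) hc
          simpa using this
        exact (hd.eventually_lt_const ha).mono fun j hj => hj.le
      exact this.mono fun j hj i hi => hj i (Finset.mem_Icc.2 (abs_le.1 hi))
    have hev2 : ∀ᶠ j in atTop, ε ≤ (μs (φ j) : Measure X) (V f (3 * a) y n) := by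
      refine hev.mono fun j hj => (h2a (φ j)).trans (measure_mono fun z hz i hi => ?_)
      calc dist ((f ^ i) y) ((f ^ i) z)
          ≤ dist ((f ^ i) y) ((f ^ i) (ys (φ j))) + dist ((f ^ i) (ys (φ j))) ((f ^ i) z) :=
            dist_triangle _ _ _
        _ ≤ a + 2 * a := add_le_add (hj i hi) (hz i)
        _ = 3 * a := by ring
    have hls := ProbabilityMeasure.limsup_measure_closed_le_of_tendsto
      (hlim.comp hφ.tendsto_atTop) (isClosed_V f hf hf' (3 * a) y n)
    exact le_trans (le_limsup_of_frequently_le hev2.frequently) hls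
  have htend : Tendsto (fun n => (ν : Measure X) (V f (3 * a) y n)) atTop
      (𝓝 ((ν : Measure X) (expansiveGamma f (3 * a) y))) := by
    have := tendsto_measure_iInter_atTop (μ := (ν : Measure X)) (s := fun n => V f (3 * a) y n)
      (fun n => ((isClosed_V f hf hf' (3 * a) y n).measurableSet).nullMeasurableSet)
      (antitone_V f (3 * a) y) ⟨0, measure_ne_top _ _⟩
    rw [iInter_V] at this
    exact this
  exact ⟨y, ge_of_tendsto' htend hVn⟩

end Stmt19Aux

/-- The set of expansive measures of `f` is a `G_δσ` subset (a countable union of `G_δ`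
sets) of the space of Borel probability measures with the weak topology. -/
theorem stmt19 {X : Type*} [MetricSpace X] [PolishSpace X] [MeasurableSpace X] [BorelSpace X]
    (f : Equiv.Perm X) (hf : UniformContinuous f) (hf' : UniformContinuous f.symm) :
    ∃ S : ℕ → Set (ProbabilityMeasure X), (∀ k, IsGδ (S k)) ∧
      {μ : ProbabilityMeasure X |
        ∃ δ > (0 : ℝ), ∀ x : X, (μ : Measure X) (expansiveGamma f δ x) = 0} = ⋃ k, S k := by
  classical
  set W : ℝ → ℝ≥0∞ → Set (ProbabilityMeasure X) := fun a ε =>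
    {μ | ∃ x, ε ≤ (μ : Measure X) (expansiveGamma f a x)} with hW
  refine ⟨fun k => ⋂ m : ℕ, (closure (W (1 / (k + 1)) (((m : ℝ≥0∞) + 1)⁻¹)))ᶜ, ?_, ?_⟩
  · intro k
    exact IsGδ.iInter fun m => isClosed_closure.isOpen_compl.isGδ
  · ext μ
    simp only [mem_setOf_eq, mem_iUnion, mem_iInter, mem_compl_iff]
    constructor
    · rintro ⟨δ, hδ, h0⟩
      obtain ⟨k, hk⟩ := exists_nat_gt (3 / δ)
      have hak : (0 : ℝ) < 1 / (k + 1) := by positivity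
      have hk1 : (3 : ℝ) / δ < (k : ℝ) + 1 := hk.trans (by linarith)
      have h3' : (3 : ℝ) < ((k : ℝ) + 1) * δ := (div_lt_iff₀ hδ).1 hk1
      have h3 : 3 * (1 / ((k : ℝ) + 1)) ≤ δ := by
        rw [mul_one_div, div_le_iff₀ (by positivity : (0 : ℝ) < (k : ℝ) + 1)]
        nlinarith
      refine ⟨k, fun m hmem => ?_⟩
      obtain ⟨x, hx⟩ := Stmt19Aux.closure_W_subset f hf hf' hak
        (ε := ((m : ℝ≥0∞) + 1)⁻¹) (by simp) (by simp) hmem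
      have hz : (μ : Measure X) (expansiveGamma f (3 * (1 / ((k : ℝ) + 1))) x) = 0 :=
        measure_mono_null (Stmt19Aux.gamma_mono f h3 x) (h0 x)
      rw [hz] at hx
      simp at hx
    · rintro ⟨k, hk⟩
      refine ⟨1 / (k + 1), by positivity, fun x => ?_⟩
      by_contra h0
      obtain ⟨m, hm⟩ := ENNReal.exists_inv_nat_lt h0
      have hmono : ((m : ℝ≥0∞) + 1)⁻¹ ≤ ((m : ℝ≥0∞))⁻¹ :=
        ENNReal.inv_le_inv.2 le_self_add
      have hμW : μ ∈ W (1 / (k + 1)) (((m : ℝ≥0∞) + 1)⁻¹) :=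
        ⟨x, (hmono.trans_lt hm).le⟩
      exact hk m (subset_closure hμW)
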